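/- Let (X,μ) be a finite measure space and let P be an orthogonal projection (a bounded self-adjoint idempotent operator) on L²(X,μ). Then both P and I − P map almost-everywhere nonnegative functions to almost-everywhere nonnegative functions if and only if there exists a measurable set E ⊆ X such that P is the operator of multiplication by the indicator function 1_E (equivalently, the range of P is the subspace L²(E) of functions vanishing a.e. off E). -/

import Mathlib

open MeasureTheory

/-- An orthogonal projection `P` on `L²(X,μ)` is such that both `P` and `I - P`
preserve a.e.-nonnegativity if and only if `P` is multiplication by the indicator
function of a measurable set `E`. -/
theorem orthogonalProjection_positive_iff_indicator
    {X : Type*} [MeasurableSpace X] (μ : Measure X) [IsFiniteMeasure μ]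
    (P : Lp ℝ 2 μ →L[ℝ] Lp ℝ 2 μ)
    (hidem : ∀ f : Lp ℝ 2 μ, P (P f) = P f)
    (hsa : ∀ f g : Lp ℝ 2 μ, @inner ℝ _ _ (P f) g = @inner ℝ _ _ f (P g)) :
    ((∀ f : Lp ℝ 2 μ, (∀ᵐ x ∂μ, 0 ≤ f x) → (∀ᵐ x ∂μ, 0 ≤ (P f) x)) ∧
      (∀ f : Lp ℝ 2 μ, (∀ᵐ x ∂μ, 0 ≤ f x) → (∀ᵐ x ∂μ, 0 ≤ f x - (P f) x)))
    ↔ ∃ E : Set X, MeasurableSet E ∧ ∀ f : Lp ℝ 2 μ,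
        (P f : X → ℝ) =ᵐ[μ] fun x => E.indicator (fun _ => (1:ℝ)) x * f x := by
  constructor
  · rintro ⟨hpos, hpos'⟩
    -- the constant function 1 as an element of L²
    set one : Lp ℝ 2 μ := (memLp_const (1:ℝ)).toLp _ with hone_def
    have hone : (one : X → ℝ) =ᵐ[μ] fun _ => (1:ℝ) := MemLp.coeFn_toLp _
    have hone_nonneg : ∀ᵐ x ∂μ, 0 ≤ one x := by
      filter_upwards [hone] with x hx; rw [hx]; norm_num
    set g : Lp ℝ 2 μ := P one with hg_def
    have hg0 : ∀ᵐ x ∂μ, 0 ≤ g x := hpos one hone_nonneg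
    have hg1 : ∀ᵐ x ∂μ, g x ≤ 1 := by
      filter_upwards [hpos' one hone_nonneg, hone] with x hx h1
      rw [h1] at hx; linarith
    -- key inner-product computation : ⟪P f, one - P one⟫ = 0 and ⟪f - P f, P one⟫ = 0
    have key1 : ∀ f : Lp ℝ 2 μ, @inner ℝ _ _ (P f) (one - g) = 0 := by
      intro f
      have h2 : @inner ℝ _ _ (P f) g = @inner ℝ _ _ (P f) one := by
        rw [hg_def, ← hsa (P f) one, hidem]
      rw [inner_sub_right, h2, sub_self]
    have key2 : ∀ f : Lp ℝ 2 μ, @inner ℝ _ _ (f - P f) g = 0 := by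
      intro f
      have h2 : @inner ℝ _ _ (P f) g = @inner ℝ _ _ f g := by
        conv_rhs => rw [hg_def]
        rw [hg_def, hsa f (P one), hidem]
      rw [inner_sub_left, h2, sub_self]
    -- integral versions
    have inner_eq : ∀ u v : Lp ℝ 2 μ, @inner ℝ _ _ u v = ∫ x, u x * v x ∂μ := by
      intro u v
      rw [L2.inner_def]
      simp [RCLike.inner_apply]
      exact integral_congr_ae (Filter.Eventually.of_forall fun x => mul_comm _ _)
    -- g = g² almost everywhere, hence g ∈ {0,1} a.e.
    have hgsq : ∀ᵐ x ∂μ, g x = 0 ∨ g x = 1 := by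
      have h0 : ∫ x, g x * (one x - g x) ∂μ = 0 := by
        have := key1 one
        rw [inner_eq] at this
        rw [← this]
        refine integral_congr_ae ?_
        filter_upwards [Lp.coeFn_sub one g] with x hx
        simp only [hx, Pi.sub_apply]
        rfl
      have hint : Integrable (fun x => g x * (one x - g x)) μ := by
        have := L2.integrable_inner (𝕜 := ℝ) g (one - g)
        refine this.congr ?_
        filter_upwards [Lp.coeFn_sub one g] with x hx
        rw [hx]; simp [RCLike.inner_apply]
        ring
      have hnn : 0 ≤ᵐ[μ] fun x => g x * (one x - g x) := by
        filter_upwards [hg0, hg1, hone] with x h0 h1 ho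
        have ho' : (one : X → ℝ) x = 1 := ho
        rw [ho']
        exact mul_nonneg h0 (by linarith)
      have := (integral_eq_zero_iff_of_nonneg_ae hnn hint).mp h0
      filter_upwards [this, hone] with x hx ho
      have ho' : (one : X → ℝ) x = 1 := ho
      rw [ho'] at hx
      simp only [Pi.zero_apply] at hx
      rcases mul_eq_zero.mp hx with h | h
      · exact Or.inl h
      · exact Or.inr (by linarith)
    -- the set E
    refine ⟨{x | g x = 1}, ?_, ?_⟩
    · have : StronglyMeasurable (g : X → ℝ) := Lp.stronglyMeasurable g
      exact this.measurable (measurableSet_singleton 1)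
    -- main claim for nonnegative f
    have main : ∀ f : Lp ℝ 2 μ, (∀ᵐ x ∂μ, 0 ≤ f x) →
        (P f : X → ℝ) =ᵐ[μ] fun x => ({x | g x = 1} : Set X).indicator (fun _ => (1:ℝ)) x * f x := by
      intro f hf
      have h1 : ∀ᵐ x ∂μ, (P f) x * (1 - g x) = 0 := by
        have h0 : ∫ x, (P f) x * (one x - g x) ∂μ = 0 := by
          have := key1 f
          rw [inner_eq] at this
          rw [← this]
          refine integral_congr_ae ?_
          filter_upwards [Lp.coeFn_sub one g] with x hx
          simp only [hx, Pi.sub_apply]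
        have hint : Integrable (fun x => (P f) x * (one x - g x)) μ := by
          have := L2.integrable_inner (𝕜 := ℝ) (P f) (one - g)
          refine this.congr ?_
          filter_upwards [Lp.coeFn_sub one g] with x hx
          rw [hx]; simp [RCLike.inner_apply]
          ring
        have hnn : 0 ≤ᵐ[μ] fun x => (P f) x * (one x - g x) := by
          filter_upwards [hpos f hf, hg1, hone] with x h0 h1' ho
          have ho' : (one : X → ℝ) x = 1 := ho
          rw [ho']
          exact mul_nonneg h0 (by linarith)
        have := (integral_eq_zero_iff_of_nonneg_ae hnn hint).mp h0
        filter_upwards [this, hone] with x hx ho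
        have ho' : (one : X → ℝ) x = 1 := ho
        rw [ho'] at hx
        simpa using hx
      have h2 : ∀ᵐ x ∂μ, (f x - (P f) x) * g x = 0 := by
        have h0 : ∫ x, (f x - (P f) x) * g x ∂μ = 0 := by
          have := key2 f
          rw [inner_eq] at this
          rw [← this]
          refine integral_congr_ae ?_
          filter_upwards [Lp.coeFn_sub f (P f)] with x hx
          simp only [hx, Pi.sub_apply]
        have hint : Integrable (fun x => (f x - (P f) x) * g x) μ := by
          have := L2.integrable_inner (𝕜 := ℝ) (f - P f) g
          refine this.congr ?_
          filter_upwards [Lp.coeFn_sub f (P f)] with x hx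
          rw [hx]; simp [RCLike.inner_apply]
          ring
        have hnn : 0 ≤ᵐ[μ] fun x => (f x - (P f) x) * g x := by
          filter_upwards [hpos' f hf, hg0] with x h0 h1'
          exact mul_nonneg h0 h1'
        exact (integral_eq_zero_iff_of_nonneg_ae hnn hint).mp h0
      filter_upwards [h1, h2, hgsq] with x hx1 hx2 hxg
      rcases hxg with h | h
      · have hx : x ∉ {x | g x = 1} := by simp [h]
        rw [Set.indicator_of_notMem hx, zero_mul]
        rw [h] at hx1
        simpa using hx1
      · have hx : x ∈ {x | g x = 1} := h
        rw [Set.indicator_of_mem hx, one_mul]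
        rw [h] at hx2
        simp only [mul_one] at hx2
        linarith
    -- general f : split into positive and negative parts
    intro f
    have hpp : ∀ᵐ x ∂μ, 0 ≤ (Lp.posPart f) x := by
      filter_upwards [Lp.coeFn_posPart f] with x hx
      rw [hx]; exact le_max_right _ _
    have hnp : ∀ᵐ x ∂μ, 0 ≤ (Lp.negPart f) x := by
      filter_upwards [Lp.coeFn_negPart_eq_max f] with x hx
      rw [hx]; exact le_max_right _ _
    have hsplit : f = Lp.posPart f - Lp.negPart f := by
      apply Lp.ext
      filter_upwards [Lp.coeFn_sub (Lp.posPart f) (Lp.negPart f),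
        Lp.coeFn_posPart f, Lp.coeFn_negPart f] with x h1 h2 h3
      rw [h1]
      simp only [Pi.sub_apply, h2, h3]
      rcases le_total (f x) 0 with h | h
      · rw [max_eq_right h, min_eq_left h]; ring
      · rw [max_eq_left h, min_eq_right h]; ring
    have e1 := main (Lp.posPart f) hpp
    have e2 := main (Lp.negPart f) hnp
    have hP : P f = P (Lp.posPart f) - P (Lp.negPart f) := by
      have := map_sub P (Lp.posPart f) (Lp.negPart f)
      rw [← hsplit] at this
      exact this
    rw [hP]
    filter_upwards [Lp.coeFn_sub (P (Lp.posPart f)) (P (Lp.negPart f)), e1, e2,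
      Lp.coeFn_posPart f, Lp.coeFn_negPart f] with x h1 h2 h3 h5 h6
    rw [h1]
    simp only [Pi.sub_apply, h2, h3, h5, h6]
    rw [← mul_sub]
    congr 1
    rw [sub_neg_eq_add, max_add_min, add_zero]
  · rintro ⟨E, hE, hPE⟩
    constructor
    · intro f hf
      filter_upwards [hPE f, hf] with x h1 h2
      rw [h1]
      exact mul_nonneg (Set.indicator_nonneg (fun _ _ => zero_le_one) x) h2
    · intro f hf
      filter_upwards [hPE f, hf] with x h1 h2
      rw [h1]
      by_cases hx : x ∈ E
      · rw [Set.indicator_of_mem hx]; simp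
      · rw [Set.indicator_of_notMem hx]; simpa using h2
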